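/- Let g ≥ 2, L ≥ 0, and α ∈ ℝ with σ := min_{0≤i≤L} ‖g^i (g²−1) α‖ > 0. Define the seed α_L by α_{L,i}(n) := α·n·g^{L−i−1}. Then for every λ with 0 ≤ λ ≤ L, the quantity σ_λ(α_L) := Σ_{0≤i<λ} γ_i(α_L) satisfies σ_λ(α_L) ≥ c_g·λ/log(1/σ) − C_g for constants c_g, C_g > 0 depending only on g. -/

import Mathlib

/-- Distance from `x` to the nearest integer. -/
noncomputable def nint (x : ℝ) : ℝ := |x - round x|

/-- The quantity `γ_i(β)` for a seed `β` of maps `{0,…,g−1} → ℝ`. -/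
noncomputable def gam (g : ℕ) (β : ℕ → ℕ → ℝ) (i : ℕ) : ℝ :=
  (2 * Real.log 2) / (((g : ℝ) - 1) * (g : ℝ) ^ 4 * (Real.log g) ^ 2) *
    ∑ n ∈ Finset.range g, ∑ m ∈ Finset.range n,
      nint (((g : ℝ) * β i m - β (i + 1) m) - ((g : ℝ) * β i n - β (i + 1) n)) ^ 2

/-- The quantity `σ_λ(β)`. -/
noncomputable def sig (g : ℕ) (β : ℕ → ℕ → ℝ) (lam : ℕ) : ℝ :=
  ∑ i ∈ Finset.range lam, gam g β i

/-- The seed `α_L` attached to the digital reverse: `α_{L,i}(n) = α n g^{L−i−1}`. -/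
noncomputable def seedL (g L : ℕ) (α : ℝ) : ℕ → ℕ → ℝ :=
  fun i n => α * n * (g : ℝ) ^ ((L : ℤ) - i - 1)

lemma nint_nonneg (x : ℝ) : 0 ≤ nint x := abs_nonneg _

lemma nint_le_half (x : ℝ) : nint x ≤ 1 / 2 := abs_sub_round x

lemma nint_int_add (m : ℤ) (x : ℝ) : nint ((m : ℝ) + x) = nint x := by
  unfold nint
  rw [round_intCast_add]
  push_cast
  ring_nf

lemma nint_neg (x : ℝ) : nint (-x) = nint x := by
  unfold nint
  rw [abs_sub_round_eq_min, abs_sub_round_eq_min]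
  by_cases h : Int.fract x = 0
  · rw [Int.fract_neg_eq_zero.mpr h, h]
  · rw [Int.fract_neg h]
    rw [min_comm]
    congr 1
    ring
lemma nint_of_abs_le (x : ℝ) (h : |x| ≤ 1 / 2) : nint x = |x| := by
  unfold nint
  rcases eq_or_lt_of_le h with h1 | h1
  · rcases (abs_eq (by norm_num : (0:ℝ) ≤ 1/2)).mp h1 with h2 | h2
    · rw [h2]; norm_num [round_eq]
    · rw [h2]; norm_num [round_eq]
  · have : round x = 0 := by
      rw [round_eq_zero_iff]
      constructor
      · linarith [neg_abs_le x]
      · linarith [le_abs_self x]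
    rw [this]
    norm_num

lemma nint_nat_mul (g : ℕ) (x : ℝ) (h : (g : ℝ) * nint x ≤ 1 / 2) :
    nint ((g : ℝ) * x) = g * nint x := by
  have hg0 : (0:ℝ) ≤ (g:ℝ) := Nat.cast_nonneg g
  have he : (g : ℝ) * x = ((g * round x : ℤ) : ℝ) + (g : ℝ) * (x - round x) := by
    push_cast; ring
  rw [he, nint_int_add, nint_of_abs_le]
  · rw [abs_mul, abs_of_nonneg hg0]; rfl
  · rw [abs_mul, abs_of_nonneg hg0]; exact h

lemma escape (g : ℕ) (hg : 2 ≤ g) (y σ : ℝ) (L K j0 : ℕ)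
    (ht : ∀ j ≤ L, σ ≤ nint ((g:ℝ)^j * y))
    (hK : 1 / (2*(g:ℝ)) ≤ (g:ℝ)^K * σ)
    (hj : j0 + K ≤ L) :
    ∃ k ≤ K, 1/(2*(g:ℝ)) ≤ nint ((g:ℝ)^(j0+k) * y) := by
  have hgR : (2:ℝ) ≤ (g:ℝ) := by exact_mod_cast hg
  by_contra hcon
  push_neg at hcon
  have step : ∀ k ≤ K, nint ((g:ℝ)^(j0+k) * y) = (g:ℝ)^k * nint ((g:ℝ)^j0 * y) := by
    intro k hk
    induction k with
    | zero => simp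
    | succ k ih =>
      have hk' : k ≤ K := le_of_lt (Nat.lt_of_succ_le hk)
      have hlt := hcon k hk'
      have hmul : (g:ℝ) * nint ((g:ℝ)^(j0+k) * y) ≤ 1/2 := by
        have : (g:ℝ) * nint ((g:ℝ)^(j0+k) * y) < (g:ℝ) * (1/(2*(g:ℝ))) :=
          mul_lt_mul_of_pos_left hlt (by linarith)
        have h2 : (g:ℝ) * (1/(2*(g:ℝ))) = 1/2 := by
          field_simp
        linarith
      have he : (g:ℝ)^(j0+(k+1)) * y = (g:ℝ) * ((g:ℝ)^(j0+k) * y) := by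
        rw [← Nat.add_assoc, pow_succ]; ring
      rw [he, nint_nat_mul g _ hmul, ih hk', pow_succ]; ring
  have h1 := step K le_rfl
  have h2 := hcon K le_rfl
  have h3 := ht j0 (by omega)
  have h4 : (g:ℝ)^K * σ ≤ (g:ℝ)^K * nint ((g:ℝ)^j0 * y) :=
    mul_le_mul_of_nonneg_left h3 (by positivity)
  linarith

lemma gam_nonneg (g : ℕ) (hg : 2 ≤ g) (β : ℕ → ℕ → ℝ) (i : ℕ) : 0 ≤ gam g β i := by
  have hgR : (2:ℝ) ≤ (g:ℝ) := by exact_mod_cast hg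
  have hlog : 0 < Real.log g := Real.log_pos (by linarith)
  unfold gam
  have hc : 0 ≤ (2 * Real.log 2) / (((g : ℝ) - 1) * (g : ℝ) ^ 4 * (Real.log g) ^ 2) := by
    apply div_nonneg
    · have := Real.log_pos (by norm_num : (1:ℝ) < 2); linarith
    · exact mul_nonneg (mul_nonneg (by linarith) (by positivity)) (by positivity)
  apply mul_nonneg hc
  apply Finset.sum_nonneg; intro n _
  apply Finset.sum_nonneg; intro m _
  positivity

lemma gam_lower (g L i : ℕ) (hg : 2 ≤ g) (α : ℝ) (hi : i + 2 ≤ L) :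
    (2 * Real.log 2) / (((g:ℝ)-1) * (g:ℝ)^4 * (Real.log g)^2) *
      nint ((g:ℝ)^(L - i - 2) * ((g:ℝ)^2 - 1) * α) ^ 2 ≤ gam g (seedL g L α) i := by
  have hgR : (2:ℝ) ≤ (g:ℝ) := by exact_mod_cast hg
  have hg0 : (g:ℝ) ≠ 0 := by linarith
  have hlog2 : 0 < Real.log 2 := Real.log_pos (by norm_num)
  have hlogg : 0 < Real.log g := Real.log_pos (by linarith)
  have hc : 0 ≤ (2 * Real.log 2) / (((g : ℝ) - 1) * (g : ℝ) ^ 4 * (Real.log g) ^ 2) := by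
    exact div_nonneg (by linarith)
      (mul_nonneg (mul_nonneg (by linarith) (by positivity)) (by positivity))
  unfold gam
  apply mul_le_mul_of_nonneg_left _ hc
  have h1 : nint (((g : ℝ) * seedL g L α i 0 - seedL g L α (i + 1) 0)
        - ((g : ℝ) * seedL g L α i 1 - seedL g L α (i + 1) 1)) ^ 2
      = nint ((g:ℝ)^(L - i - 2) * ((g:ℝ)^2 - 1) * α) ^ 2 := by
    congr 1
    have he : (((g : ℝ) * seedL g L α i 0 - seedL g L α (i + 1) 0)
        - ((g : ℝ) * seedL g L α i 1 - seedL g L α (i + 1) 1))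
        = -((g:ℝ)^(L - i - 2) * ((g:ℝ)^2 - 1) * α) := by
      simp only [seedL]
      have e1 : (L:ℤ) - (i:ℤ) - 1 = ((L - i - 2 : ℕ) : ℤ) + 1 := by
        omega
      have e2 : (L:ℤ) - ((i:ℕ)+1 : ℕ) - 1 = ((L - i - 2 : ℕ) : ℤ) := by
        push_cast; omega
      rw [e1, e2, zpow_add₀ hg0, zpow_one, zpow_natCast]
      ring
    rw [he, nint_neg]
  calc nint ((g:ℝ)^(L - i - 2) * ((g:ℝ)^2 - 1) * α) ^ 2
      = ∑ m ∈ Finset.range 1, nint (((g : ℝ) * seedL g L α i m - seedL g L α (i + 1) m)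
          - ((g : ℝ) * seedL g L α i 1 - seedL g L α (i + 1) 1)) ^ 2 := by
        rw [Finset.sum_range_one, h1]
    _ ≤ ∑ n ∈ Finset.range g, ∑ m ∈ Finset.range n,
          nint (((g : ℝ) * seedL g L α i m - seedL g L α (i + 1) m)
          - ((g : ℝ) * seedL g L α i n - seedL g L α (i + 1) n)) ^ 2 := by
        apply Finset.single_le_sum (f := fun n => ∑ m ∈ Finset.range n,
          nint (((g : ℝ) * seedL g L α i m - seedL g L α (i + 1) m)
          - ((g : ℝ) * seedL g L α i n - seedL g L α (i + 1) n)) ^ 2)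
        · intro n _
          apply Finset.sum_nonneg; intro m _; positivity
        · exact Finset.mem_range.mpr (by omega)

theorem reverse_sigma_lower (g : ℕ) (hg : 2 ≤ g) :
    ∃ c C : ℝ, 0 < c ∧ 0 < C ∧ ∀ (L : ℕ) (α : ℝ),
      0 < (Finset.range (L + 1)).inf'
          (Finset.nonempty_range_iff.mpr (Nat.succ_ne_zero L))
          (fun i => nint ((g : ℝ) ^ i * ((g : ℝ) ^ 2 - 1) * α)) →
      ∀ lam : ℕ, lam ≤ L →
        c * lam / Real.log (1 / ((Finset.range (L + 1)).inf'
            (Finset.nonempty_range_iff.mpr (Nat.succ_ne_zero L))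
            (fun i => nint ((g : ℝ) ^ i * ((g : ℝ) ^ 2 - 1) * α)))) - C ≤
          sig g (seedL g L α) lam := by
  have hgR : (2:ℝ) ≤ (g:ℝ) := by exact_mod_cast hg
  have hlog2 : 0 < Real.log 2 := Real.log_pos (by norm_num)
  have hlogg : 0 < Real.log g := Real.log_pos (by linarith)
  set c0 : ℝ := (2 * Real.log 2) / (((g:ℝ)-1) * (g:ℝ)^4 * (Real.log g)^2) with hc0def
  have hc0 : 0 < c0 :=
    div_pos (by linarith) (mul_pos (mul_pos (by linarith) (by positivity)) (by positivity))
  set c1 : ℝ := c0 * (1/(2*(g:ℝ)))^2 with hc1def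
  have hc1 : 0 < c1 := by
    apply mul_pos hc0; positivity
  set a : ℝ := 1/Real.log g + 3/Real.log 2 with hadef
  have ha : 0 < a := by positivity
  refine ⟨c1/a, c1 * (1/(a*Real.log 2) + 2), by positivity, by positivity, ?_⟩
  intro L α hσpos lam hlam
  set σ : ℝ := (Finset.range (L + 1)).inf'
      (Finset.nonempty_range_iff.mpr (Nat.succ_ne_zero L))
      (fun i => nint ((g : ℝ) ^ i * ((g : ℝ) ^ 2 - 1) * α)) with hσdef
  set y : ℝ := ((g:ℝ)^2 - 1) * α with hydef
  have ht : ∀ j ≤ L, σ ≤ nint ((g:ℝ)^j * y) := by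
    intro j hj
    have := Finset.inf'_le (b := j)
      (f := fun i => nint ((g : ℝ) ^ i * ((g : ℝ) ^ 2 - 1) * α))
      (Finset.mem_range.mpr (Nat.lt_succ_of_le hj))
    rw [hσdef, hydef, ← mul_assoc]
    exact this
  have hσhalf : σ ≤ 1/2 := le_trans (ht 0 (by omega)) (nint_le_half _)
  set ℓ : ℝ := Real.log (1/σ) with hℓdef
  have hℓ2 : Real.log 2 ≤ ℓ := by
    apply Real.log_le_log (by norm_num)
    rw [le_div_iff₀ hσpos]; linarith
  have hℓpos : 0 < ℓ := lt_of_lt_of_le hlog2 hℓ2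
  set K : ℕ := ⌈ℓ / Real.log g⌉₊ + 1 with hKdef
  have hKb : 1 / (2*(g:ℝ)) ≤ (g:ℝ)^K * σ := by
    have h1 : ℓ ≤ (K:ℝ) * Real.log g := by
      have := Nat.le_ceil (ℓ / Real.log g)
      have hK1 : (⌈ℓ / Real.log g⌉₊ : ℝ) ≤ (K:ℝ) := by
        rw [hKdef]; push_cast; linarith
      have h2 : ℓ / Real.log g ≤ (K:ℝ) := le_trans this hK1
      calc ℓ = (ℓ / Real.log g) * Real.log g := by field_simp
        _ ≤ (K:ℝ) * Real.log g := mul_le_mul_of_nonneg_right h2 hlogg.le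
    have h3 : 1/σ ≤ (g:ℝ)^K := by
      rw [← Real.log_le_log_iff (by positivity) (by positivity), Real.log_pow]
      exact h1
    have h4 : 1 ≤ (g:ℝ)^K * σ := by
      have h5 := mul_le_mul_of_nonneg_right h3 hσpos.le
      rwa [one_div, inv_mul_cancel₀ hσpos.ne'] at h5
    calc 1/(2*(g:ℝ)) ≤ 1 := by rw [div_le_one (by linarith)]; linarith
      _ ≤ _ := h4
  set lam' : ℕ := min lam (L - 1) with hlam'def
  set W : ℕ := lam' / (K + 1) with hWdef
  -- each window contains a good index
  have key : ∀ w, w < W → ∃ i, w*(K+1) ≤ i ∧ i ≤ w*(K+1) + K ∧ i < lam ∧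
      c1 ≤ gam g (seedL g L α) i := by
    intro w hw
    have hwin : (w+1) * (K+1) ≤ lam' := by
      calc (w+1)*(K+1) ≤ (lam' / (K+1)) * (K+1) :=
            Nat.mul_le_mul_right _ (Nat.succ_le_of_lt hw)
        _ ≤ lam' := Nat.div_mul_le_self _ _
    set M : ℕ := w * (K+1) with hMdef
    have hM2 : M + K + 1 ≤ lam' := by
      have : M + (K+1) = (w+1)*(K+1) := by rw [hMdef]; ring
      omega
    have hlamlam : lam' ≤ lam := Nat.min_le_left _ _
    have hlamL : lam' ≤ L - 1 := Nat.min_le_right _ _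
    have hL2 : 2 ≤ L := by omega
    obtain ⟨k, hk, hbig⟩ := escape g hg y σ L K (L - 2 - (M + K)) ht hKb (by omega)
    refine ⟨M + (K - k), by omega, by omega, by omega, ?_⟩
    have hi2 : (M + (K - k)) + 2 ≤ L := by omega
    have hje : L - (M + (K - k)) - 2 = (L - 2 - (M + K)) + k := by omega
    have hlow := gam_lower g L (M + (K - k)) hg α hi2
    rw [hje] at hlow
    have hbig' : 1/(2*(g:ℝ)) ≤ nint ((g:ℝ)^((L - 2 - (M+K)) + k) * ((g:ℝ)^2-1) * α) := by
      rw [mul_assoc]; exact hbig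
    have hsq : (1/(2*(g:ℝ)))^2 ≤ nint ((g:ℝ)^((L - 2 - (M+K)) + k) * ((g:ℝ)^2-1) * α) ^ 2 :=
      pow_le_pow_left₀ (by positivity) hbig' 2
    calc c1 = c0 * (1/(2*(g:ℝ)))^2 := hc1def
      _ ≤ c0 * nint ((g:ℝ)^((L - 2 - (M+K)) + k) * ((g:ℝ)^2-1) * α) ^ 2 :=
          mul_le_mul_of_nonneg_left hsq hc0.le
      _ ≤ gam g (seedL g L α) (M + (K - k)) := hlow
  -- choose good indices
  have key' : ∀ w : ℕ, ∃ i, w < W → (w*(K+1) ≤ i ∧ i ≤ w*(K+1) + K ∧ i < lam ∧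
      c1 ≤ gam g (seedL g L α) i) := by
    intro w
    by_cases h : w < W
    · obtain ⟨i, hi⟩ := key w h
      exact ⟨i, fun _ => hi⟩
    · exact ⟨0, fun h' => absurd h' h⟩
  choose f hf using key'
  have hmono : ∀ w1 w2, w1 < W → w2 < W → w1 < w2 → f w1 < f w2 := by
    intro w1 w2 h1 h2 h12
    obtain ⟨ha1, hb1, -, -⟩ := hf w1 h1
    obtain ⟨ha2, -, -, -⟩ := hf w2 h2
    calc f w1 ≤ w1*(K+1) + K := hb1
      _ < (w1+1)*(K+1) := by have : (w1+1)*(K+1) = w1*(K+1) + (K+1) := by ring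
                             omega
      _ ≤ w2*(K+1) := Nat.mul_le_mul_right _ h12
      _ ≤ f w2 := ha2
  -- sum lower bound
  have hsum : (W:ℝ) * c1 ≤ sig g (seedL g L α) lam := by
    have hsub : (Finset.range W).image f ⊆ Finset.range lam := by
      intro i hi
      obtain ⟨w, hw, rfl⟩ := Finset.mem_image.mp hi
      exact Finset.mem_range.mpr (hf w (Finset.mem_range.mp hw)).2.2.1
    have h1 : ∑ i ∈ (Finset.range W).image f, gam g (seedL g L α) i ≤
        sig g (seedL g L α) lam := by
      apply Finset.sum_le_sum_of_subset_of_nonneg hsub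
      intro i _ _
      exact gam_nonneg g hg _ i
    have h2 : ∑ i ∈ (Finset.range W).image f, gam g (seedL g L α) i =
        ∑ w ∈ Finset.range W, gam g (seedL g L α) (f w) := by
      apply Finset.sum_image
      intro x hx y hy hxy
      by_contra hne
      rcases Nat.lt_or_ge x y with h | h
      · exact absurd hxy (Nat.ne_of_lt (hmono x y (Finset.mem_range.mp hx) (Finset.mem_range.mp hy) h))
      · have : y < x := by omega
        exact absurd hxy.symm (Nat.ne_of_lt (hmono y x (Finset.mem_range.mp hy) (Finset.mem_range.mp hx) this))
    have h3 : (W:ℝ) * c1 ≤ ∑ w ∈ Finset.range W, gam g (seedL g L α) (f w) := by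
      calc (W:ℝ) * c1 = ∑ _w ∈ Finset.range W, c1 := by
            rw [Finset.sum_const, Finset.card_range]; ring
        _ ≤ _ := Finset.sum_le_sum (fun w hw => (hf w (Finset.mem_range.mp hw)).2.2.2)
    linarith
  -- final arithmetic
  have hKa : (K:ℝ) + 1 ≤ a * ℓ := by
    have h1 : (⌈ℓ / Real.log g⌉₊ : ℝ) < ℓ / Real.log g + 1 :=
      Nat.ceil_lt_add_one (by positivity)
    have h2 : (3:ℝ) ≤ 3 * ℓ / Real.log 2 := by
      rw [le_div_iff₀ hlog2]; linarith
    have : (K:ℝ) = (⌈ℓ / Real.log g⌉₊ : ℝ) + 1 := by rw [hKdef]; push_cast; ring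
    rw [hadef]
    have he : (1/Real.log g + 3/Real.log 2) * ℓ = ℓ/Real.log g + 3*ℓ/Real.log 2 := by
      field_simp
    rw [he]
    linarith
  have hlamlam' : (lam:ℝ) ≤ (lam':ℝ) + 1 := by
    have : lam ≤ lam' + 1 := by omega
    exact_mod_cast this
  have hlam'W : (lam':ℝ) < ((K:ℝ)+1) * ((W:ℝ)+1) := by
    have h1 : lam' < (W + 1) * (K+1) := by
      have := Nat.lt_div_mul_add (a := lam') (b := K+1) (by omega)
      have he : (W + 1) * (K+1) = lam' / (K+1) * (K+1) + (K+1) := by rw [hWdef]; ring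
      omega
    have : (lam':ℝ) < ((W + 1) * (K+1) : ℕ) := by exact_mod_cast h1
    push_cast at this ⊢
    linarith
  have hchain : (lam:ℝ) ≤ a*ℓ*((W:ℝ)+1) + 1 := by
    have h1 : ((K:ℝ)+1) * ((W:ℝ)+1) ≤ a*ℓ*((W:ℝ)+1) := by
      apply mul_le_mul_of_nonneg_right hKa (by positivity)
    linarith
  have hdiv : (lam:ℝ)/(a*ℓ) ≤ (W:ℝ) + 1 + 1/(a*ℓ) := by
    rw [div_le_iff₀ (by positivity)]
    have he : ((W:ℝ) + 1 + 1/(a*ℓ)) * (a*ℓ) = a*ℓ*((W:ℝ)+1) + 1 := by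
      field_simp
    rw [he]; exact hchain
  have hdiv2 : 1/(a*ℓ) ≤ 1/(a*Real.log 2) := by
    apply one_div_le_one_div_of_le (by positivity)
    exact mul_le_mul_of_nonneg_left hℓ2 ha.le
  have heq : c1/a * (lam:ℝ) / ℓ = c1 * ((lam:ℝ)/(a*ℓ)) := by
    field_simp
  have hfin : c1 * ((lam:ℝ)/(a*ℓ)) ≤ c1 * ((W:ℝ) + 1 + 1/(a*Real.log 2)) :=
    mul_le_mul_of_nonneg_left (by linarith) hc1.le
  have hexp : c1 * ((W:ℝ) + 1 + 1/(a*Real.log 2)) =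
      (W:ℝ)*c1 + c1 + c1 * (1/(a*Real.log 2)) := by ring
  have hexp2 : c1 * (1/(a*Real.log 2) + 2) = c1 * (1/(a*Real.log 2)) + 2*c1 := by ring
  linarith
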